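/- arXiv:1601.04943 — 7 statements merged into one kernel-verified Lean document; each statement's English description precedes it below -/
import Mathlib

section
/- Let α, β, γ be measurable spaces. Define the weighted bind of a measure p on ℝ≥0 × α along a measurable map f : α → Measure(ℝ≥0 × β) by wbind(p,f) = p.bind(fun (r,a) => (f a).map(fun (s,b) => (r·s, b))). Let p be a probability measure on ℝ≥0 × α, let f : α → Measure(ℝ≥0 × β) and g : β → Measure(ℝ≥0 × γ) be measurable maps all of whose values are probability measures. Then wbind(wbind(p,f), g) = wbind(p, fun a => wbind(f a, g)). -/
open MeasureTheory
open scoped ENNReal NNReal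

/-- Measurability of the weighted-map family. -/
lemma wmap_measurable {α β : Type*} [MeasurableSpace α] [MeasurableSpace β]
    (f : α → Measure (ℝ≥0 × β)) (hf : Measurable f)
    (hfprob : ∀ a, IsProbabilityMeasure (f a)) :
    Measurable (fun ra : ℝ≥0 × α => (f ra.2).map (fun sb => (ra.1 * sb.1, sb.2))) := by
  apply Measure.measurable_of_measurable_coe
  intro s hs
  have hφ : ∀ ra : ℝ≥0 × α, Measurable (fun sb : ℝ≥0 × β => (ra.1 * sb.1, sb.2)) :=
    fun ra => (measurable_const.mul measurable_fst).prodMk measurable_snd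
  have heq : ∀ ra : ℝ≥0 × α, (f ra.2).map (fun sb => (ra.1 * sb.1, sb.2)) s
      = ∫⁻ sb, s.indicator 1 (ra.1 * sb.1, sb.2) ∂(f ra.2) := by
    intro ra
    rw [Measure.map_apply (hφ ra) hs, ← lintegral_indicator_one ((hφ ra) hs)]
    rfl
  simp_rw [heq]
  let κ : ProbabilityTheory.Kernel (ℝ≥0 × α) (ℝ≥0 × β) :=
    ⟨fun ra => f ra.2, hf.comp measurable_snd⟩
  have : ProbabilityTheory.IsMarkovKernel κ := ⟨fun ra => hfprob ra.2⟩
  exact Measurable.lintegral_kernel_prod_right (κ := κ)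
    ((measurable_const.indicator hs).comp
      (((measurable_fst.comp measurable_fst).mul (measurable_fst.comp measurable_snd)).prodMk
        (measurable_snd.comp measurable_snd)))

lemma map_bind' {α β γ : Type*} [MeasurableSpace α] [MeasurableSpace β] [MeasurableSpace γ]
    (m : Measure α) (f : α → Measure β) (hf : Measurable f) {φ : β → γ} (hφ : Measurable φ) :
    (m.bind f).map φ = m.bind (fun x => (f x).map φ) := by
  rw [← Measure.bind_dirac_eq_map _ hφ, Measure.bind_bind hf.aemeasurable (show Measurable fun x => Measure.dirac (φ x) from Measure.measurable_dirac.comp hφ).aemeasurable]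
  simp_rw [Measure.bind_dirac_eq_map _ hφ]

lemma bind_map' {α β γ : Type*} [MeasurableSpace α] [MeasurableSpace β] [MeasurableSpace γ]
    (m : Measure α) {φ : α → β} (hφ : Measurable φ) (g : β → Measure γ) (hg : Measurable g) :
    (m.map φ).bind g = m.bind (fun x => g (φ x)) := by
  rw [← Measure.bind_dirac_eq_map _ hφ, Measure.bind_bind (show Measurable fun x => Measure.dirac (φ x) from Measure.measurable_dirac.comp hφ).aemeasurable hg.aemeasurable]
  simp_rw [Measure.dirac_bind hg]

/-- The weighted bind of a measure on `ℝ≥0 × α` along `f : α → Measure (ℝ≥0 × β)`: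
scores multiply along the composition. -/
noncomputable def wbind {α β : Type*} [MeasurableSpace α] [MeasurableSpace β]
    (p : Measure (ℝ≥0 × α)) (f : α → Measure (ℝ≥0 × β)) : Measure (ℝ≥0 × β) :=
  p.bind (fun ra => (f ra.2).map (fun sb => (ra.1 * sb.1, sb.2)))

/-- associativity law for the monad `P(ℝ≥0 × (−))`. -/
theorem stmt2 {α β γ : Type*} [MeasurableSpace α] [MeasurableSpace β] [MeasurableSpace γ]
    (p : Measure (ℝ≥0 × α)) (hp : IsProbabilityMeasure p)
    (f : α → Measure (ℝ≥0 × β)) (hf : Measurable f)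
    (hfprob : ∀ a, IsProbabilityMeasure (f a))
    (g : β → Measure (ℝ≥0 × γ)) (hg : Measurable g)
    (hgprob : ∀ b, IsProbabilityMeasure (g b)) :
    wbind (wbind p f) g = wbind p (fun a => wbind (f a) g) := by
  have hF := wmap_measurable f hf hfprob
  have hG := wmap_measurable g hg hgprob
  have hφ : ∀ r : ℝ≥0, Measurable (fun sb : ℝ≥0 × γ => (r * sb.1, sb.2)) :=
    fun r => (measurable_const.mul measurable_fst).prodMk measurable_snd
  have hφ' : ∀ r : ℝ≥0, Measurable (fun sb : ℝ≥0 × β => (r * sb.1, sb.2)) :=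
    fun r => (measurable_const.mul measurable_fst).prodMk measurable_snd
  simp only [wbind]
  rw [Measure.bind_bind hF.aemeasurable hG.aemeasurable]
  congr 1
  funext ra
  rw [bind_map' _ (hφ' ra.1) _ hG, map_bind' _ _ hG (hφ ra.1)]
  congr 1
  funext sb
  rw [Measure.map_map (hφ ra.1) (hφ sb.1)]
  simp only [Function.comp_def, mul_assoc]
end

section
/- Let α and β be measurable spaces, and let p be a probability measure on ℝ≥0 × α and q a probability measure on ℝ≥0 × β. Then p.bind(fun (r,a) => q.map(fun (s,b) => (r·s, (a,b)))) = q.bind(fun (s,b) => p.map(fun (r,a) => (r·s, (a,b)))), as measures on ℝ≥0 × (α × β). -/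
open MeasureTheory
open scoped ENNReal NNReal

/-- commutativity (Fubini) law for the monad `P(ℝ≥0 × (−))`. -/
theorem stmt3 {α β : Type*} [MeasurableSpace α] [MeasurableSpace β]
    (p : Measure (ℝ≥0 × α)) (hp : IsProbabilityMeasure p)
    (q : Measure (ℝ≥0 × β)) (hq : IsProbabilityMeasure q) :
    p.bind (fun ra => q.map (fun sb => (ra.1 * sb.1, (ra.2, sb.2)))) =
    q.bind (fun sb => p.map (fun ra => (ra.1 * sb.1, (ra.2, sb.2)))) := by
  have hF : Measurable fun x : (ℝ≥0 × α) × (ℝ≥0 × β) =>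
      ((x.1.1 * x.2.1, (x.1.2, x.2.2)) : ℝ≥0 × (α × β)) :=
    (measurable_fst.fst.mul measurable_snd.fst).prodMk
      (measurable_fst.snd.prodMk measurable_snd.snd)
  have hG : Measurable fun x : (ℝ≥0 × β) × (ℝ≥0 × α) =>
      ((x.2.1 * x.1.1, (x.2.2, x.1.2)) : ℝ≥0 × (α × β)) :=
    (measurable_snd.fst.mul measurable_fst.fst).prodMk
      (measurable_snd.snd.prodMk measurable_fst.snd)
  have hg : ∀ ra : ℝ≥0 × α, Measurable fun sb : ℝ≥0 × β =>
      ((ra.1 * sb.1, (ra.2, sb.2)) : ℝ≥0 × (α × β)) := fun ra =>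
    (measurable_const.mul measurable_fst).prodMk
      (measurable_const.prodMk measurable_snd)
  have hg' : ∀ sb : ℝ≥0 × β, Measurable fun ra : ℝ≥0 × α =>
      ((ra.1 * sb.1, (ra.2, sb.2)) : ℝ≥0 × (α × β)) := fun sb =>
    (measurable_fst.mul measurable_const).prodMk
      (measurable_snd.prodMk measurable_const)
  have hmeas1 : Measurable fun ra : ℝ≥0 × α =>
      q.map (fun sb => (ra.1 * sb.1, (ra.2, sb.2))) := by
    apply Measure.measurable_of_measurable_coe
    intro t ht
    simp_rw [Measure.map_apply (hg _) ht]
    exact measurable_measure_prodMk_left (hF ht)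
  have hmeas2 : Measurable fun sb : ℝ≥0 × β =>
      p.map (fun ra => (ra.1 * sb.1, (ra.2, sb.2))) := by
    apply Measure.measurable_of_measurable_coe
    intro t ht
    simp_rw [Measure.map_apply (hg' _) ht]
    exact measurable_measure_prodMk_left (hG ht)
  ext s hs
  rw [Measure.bind_apply hs hmeas1.aemeasurable, Measure.bind_apply hs hmeas2.aemeasurable]
  simp_rw [Measure.map_apply (hg _) hs, Measure.map_apply (hg' _) hs]
  have h1 : ∫⁻ ra, q ((fun sb : ℝ≥0 × β => ((ra.1 * sb.1, (ra.2, sb.2)) : ℝ≥0 × (α × β))) ⁻¹' s) ∂p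
      = (p.prod q) ((fun x : (ℝ≥0 × α) × (ℝ≥0 × β) => ((x.1.1 * x.2.1, (x.1.2, x.2.2)) : ℝ≥0 × (α × β))) ⁻¹' s) :=
    (Measure.prod_apply (hF hs)).symm
  have h2 : ∫⁻ sb, p ((fun ra : ℝ≥0 × α => ((ra.1 * sb.1, (ra.2, sb.2)) : ℝ≥0 × (α × β))) ⁻¹' s) ∂q
      = (q.prod p) ((fun x : (ℝ≥0 × β) × (ℝ≥0 × α) => ((x.2.1 * x.1.1, (x.2.2, x.1.2)) : ℝ≥0 × (α × β))) ⁻¹' s) :=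
    (Measure.prod_apply (hG hs)).symm
  rw [h1, h2, ← Measure.prod_swap, Measure.map_apply measurable_swap (hF hs)]
  rfl
end

section
/- Let X and Y be measurable spaces and h : X → Y a measurable function. For a probability measure p on ℝ≥0 × X, define the unnormalized posterior p̄ = (p.withDensity(fun (r,x) => r)).map(Prod.snd), a measure on X. Then normalization is natural in X: for every probability measure p on ℝ≥0 × X, the pushforward of p̄ along h equals the unnormalized posterior of the pushforward of p along id × h, that is, p̄.map(h) = (p.map(Prod.map id h))‾. -/
open MeasureTheory
open scoped ENNReal NNReal

lemma withDensity_map_aux {α β : Type*} [MeasurableSpace α] [MeasurableSpace β]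
    (μ : Measure α) {g : α → β} (hg : Measurable g) {f : β → ℝ≥0∞} (hf : Measurable f) :
    (μ.map g).withDensity f = (μ.withDensity (f ∘ g)).map g := by
  ext s hs
  rw [withDensity_apply _ hs, Measure.map_apply hg hs,
    withDensity_apply _ (hg hs), setLIntegral_map hs hf hg]; rfl

/-- the unnormalized-posterior construction
`p̄ = (p.withDensity (fun (r,x) => r)).map Prod.snd` is natural in `X`:
for measurable `h : X → Y`, `p̄.map h = (p.map (Prod.map id h))‾`. -/
theorem stmt5 {X Y : Type*} [MeasurableSpace X] [MeasurableSpace Y]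
    (h : X → Y) (hh : Measurable h)
    (p : Measure (ℝ≥0 × X)) (hp : IsProbabilityMeasure p) :
    ((p.withDensity (fun rx => (rx.1 : ℝ≥0∞))).map Prod.snd).map h =
    ((p.map (Prod.map id h)).withDensity (fun ry => (ry.1 : ℝ≥0∞))).map Prod.snd := by
  have hm : Measurable (Prod.map (id : ℝ≥0 → ℝ≥0) h) := measurable_id.prodMap hh
  rw [withDensity_map_aux p hm (by fun_prop), Measure.map_map measurable_snd hm,
    Measure.map_map hh measurable_snd]
  rfl
end

section
/- Let C be a small category with countable coproducts. Then the full subcategory of the presheaf-style functor category C^op ⥤ Type consisting of those functors that preserve countable products (i.e., that preserve limits of every countable discrete shape in C^op) has all (small) colimits. -/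
open CategoryTheory CategoryTheory.Limits
open Opposite

universe u

/-- A presheaf `F : Cᵒᵖ ⥤ Type` preserves countable products when it preserves limits of
every countable discrete shape in `Cᵒᵖ`. -/
def PreservesCountableProducts' {C : Type u} [SmallCategory C] (F : Cᵒᵖ ⥤ Type u) : Prop :=
  ∀ (J : Type u), Countable J → Nonempty (PreservesLimitsOfShape (Discrete J) F)

namespace Stmt9Aux

section TypesFan

variable {I : Type u} {K : Discrete I ⥤ Type u}

/-- The canonical cone over a discrete diagram in `Type` with point the Pi type. -/
def piCone (K : Discrete I ⥤ Type u) : Cone K where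
  pt := ∀ i : I, K.obj ⟨i⟩
  π := Discrete.natTrans fun j => TypeCat.ofHom fun x => x j.as

/-- The canonical cone is a limit cone. -/
def piConeIsLimit (K : Discrete I ⥤ Type u) : IsLimit (piCone K) where
  lift s := TypeCat.ofHom fun x i => s.π.app ⟨i⟩ x
  fac s := by rintro ⟨i⟩; rfl
  uniq s m hm := by
    ext x
    funext i
    exact types_congr_hom (hm ⟨i⟩) x

/-- A cone over a discrete diagram in `Type` whose comparison to the Pi type is bijective
is a limit cone. -/
noncomputable def isLimitOfBijective (c : Cone K)
    (h : Function.Bijective fun (x : c.pt) (i : I) => c.π.app ⟨i⟩ x) : IsLimit c :=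
  IsLimit.ofIsoLimit (piConeIsLimit K)
    (Cones.ext (Equiv.ofBijective _ h).toIso (by rintro ⟨i⟩; ext x; rfl)).symm

theorem bijective_of_isLimit {c : Cone K} (hc : IsLimit c) :
    Function.Bijective fun (x : c.pt) (i : I) => c.π.app ⟨i⟩ x := by
  let φ := IsLimit.conePointUniqueUpToIso hc (piConeIsLimit K)
  have key : (fun (x : c.pt) (i : I) => c.π.app ⟨i⟩ x) = ⇑φ.hom := by
    funext x i
    exact (types_congr_hom (IsLimit.conePointUniqueUpToIso_hom_comp hc (piConeIsLimit K) ⟨i⟩) x).symm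
  rw [key]
  exact φ.toEquiv.bijective

end TypesFan

section Shapes

variable {C : Type u} [SmallCategory C]
variable (hC : ∀ (J : Type u), Countable J → HasColimitsOfShape (Discrete J) C)

/-- Canonical countable index types. -/
abbrev Idx (S : Set ℕ) : Type u := ULift.{u} ↥S

/-- The chosen coproduct of a countable family. -/
noncomputable def sob (S : Set ℕ) (X : Idx S → C) : C :=
  letI := hC (Idx S) inferInstance
  ∐ X

/-- The coprojections of the chosen coproduct. -/
noncomputable def sinj (S : Set ℕ) (X : Idx S → C) (i : Idx S) : X i ⟶ sob hC S X :=
  letI := hC (Idx S) inferInstance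
  Sigma.ι X i

/-- The fan in `Cᵒᵖ` obtained from the chosen coproduct. -/
noncomputable def scone (S : Set ℕ) (X : Idx S → C) :
    Fan (fun i : Idx S => op (X i)) :=
  Fan.mk (op (sob hC S X)) (fun i => (sinj hC S X i).op)

noncomputable def sconeIsLimit (S : Set ℕ) (X : Idx S → C) :
    IsLimit (scone hC S X) := by
  letI := hC (Idx S) inferInstance
  exact Cofan.IsColimit.op (colimit.isColimit (Discrete.functor X))

/-- The comparison map for a presheaf at a chosen coproduct. -/
noncomputable def cmp (F : Cᵒᵖ ⥤ Type u) (S : Set ℕ) (X : Idx S → C) :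
    F.obj (op (sob hC S X)) → ∀ i, F.obj (op (X i)) :=
  fun x i => F.map (sinj hC S X i).op x

theorem cmp_bijective {F : Cᵒᵖ ⥤ Type u} (hF : PreservesCountableProducts' F)
    (S : Set ℕ) (X : Idx S → C) : Function.Bijective (cmp hC F S X) := by
  haveI : PreservesLimitsOfShape (Discrete (Idx S)) F := (hF _ inferInstance).some
  have h2 : IsLimit (F.mapCone (scone hC S X)) :=
    isLimitOfPreserves F (sconeIsLimit hC S X)
  exact bijective_of_isLimit h2

theorem preserves_of_cmp_bijective {F : Cᵒᵖ ⥤ Type u}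
    (hb : ∀ (S : Set ℕ) (X : Idx S → C), Function.Bijective (cmp hC F S X)) :
    PreservesCountableProducts' F := by
  intro J hJ
  obtain ⟨f, hf⟩ := countable_iff_exists_injective J |>.mp hJ
  set S : Set ℕ := Set.range f with hS
  have e : Idx S ≃ J := Equiv.ulift.trans (Equiv.ofInjective f hf).symm
  haveI : PreservesLimitsOfShape (Discrete (Idx S)) F := by
    constructor
    intro K
    set X : Idx S → C := fun i => (K.obj ⟨i⟩).unop with hX
    have hiso : Discrete.functor (fun i => op (X i)) ≅ K :=
      Discrete.natIso (fun i => Iso.refl _)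
    haveI : PreservesLimit (Discrete.functor (fun i => op (X i))) F :=
      preservesLimit_of_preserves_limit_cone (sconeIsLimit hC S X)
        (isLimitOfBijective _ (hb S X))
    exact preservesLimit_of_iso_diagram F hiso
  exact ⟨preservesLimitsOfShape_of_equiv (Discrete.equivalence e) F⟩


include hC in
theorem closedUnderLimits (J : Type u) [Category.{u} J] :
    ObjectProperty.IsClosedUnderLimitsOfShape (PreservesCountableProducts' (C := C)) J := by
  suffices ∀ (K : J ⥤ Cᵒᵖ ⥤ Type u) (c : Cone K), IsLimit c →
      (∀ j, PreservesCountableProducts' (K.obj j)) → PreservesCountableProducts' c.pt from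
    ⟨fun F ⟨h⟩ => this _ _ h.isLimit h.prop_diag_obj⟩
  intro K c hc hK
  apply preserves_of_cmp_bijective hC
  intro S X
  -- evaluated limit cones
  have hev : ∀ Z : Cᵒᵖ, IsLimit (((evaluation Cᵒᵖ (Type u)).obj Z).mapCone c) := fun Z =>
    isLimitOfPreserves _ hc
  have inje : ∀ (Z : Cᵒᵖ) (x y : c.pt.obj Z),
      (∀ j : J, (c.π.app j).app Z x = (c.π.app j).app Z y) → x = y := by
    intro Z x y hxy
    have := (Types.isLimitEquivSections (hev Z)).injective
    apply this
    apply Subtype.ext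
    funext j
    exact hxy j
  have bj : ∀ j : J, Function.Bijective (cmp hC (K.obj j) S X) := fun j =>
    cmp_bijective hC (hK j) S X
  constructor
  · -- injectivity
    intro x y hxy
    apply inje (op (sob hC S X))
    intro j
    apply (bj j).1
    funext i
    show (K.obj j).map (sinj hC S X i).op ((c.π.app j).app _ x) =
      (K.obj j).map (sinj hC S X i).op ((c.π.app j).app _ y)
    have nx := types_congr_hom ((c.π.app j).naturality (sinj hC S X i).op) x
    have ny := types_congr_hom ((c.π.app j).naturality (sinj hC S X i).op) y
    dsimp at nx ny ⊢
    rw [← nx, ← ny]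
    exact congrArg _ (congrFun hxy i)
  · -- surjectivity
    intro a
    -- glued elements in each K.obj j
    let b : ∀ j : J, (K.obj j).obj (op (sob hC S X)) := fun j =>
      (Equiv.ofBijective _ (bj j)).symm (fun i => (c.π.app j).app (op (X i)) (a i))
    have hbj : ∀ (j : J) (i : Idx S),
        (K.obj j).map (sinj hC S X i).op (b j) = (c.π.app j).app (op (X i)) (a i) := by
      intro j i
      exact congrFun ((Equiv.ofBijective _ (bj j)).apply_symm_apply
        (fun i => (c.π.app j).app (op (X i)) (a i))) i
    have hsec : (fun j : J => b j) ∈ (K ⋙ (evaluation Cᵒᵖ (Type u)).obj (op (sob hC S X))).sections := by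
      intro j j' f
      apply (bj j').1
      funext i
      show (K.obj j').map (sinj hC S X i).op ((K.map f).app _ (b j)) =
        (K.obj j').map (sinj hC S X i).op (b j')
      have hn := types_congr_hom ((K.map f).naturality (sinj hC S X i).op) (b j)
      dsimp at hn ⊢
      rw [← hn, hbj j i, hbj j' i]
      have hw := types_congr_hom (congrArg (fun (t : c.pt ⟶ K.obj j') => t.app (op (X i))) (c.w f)) (a i)
      dsimp at hw
      rw [← hw]
    set x := (Types.isLimitEquivSections (hev (op (sob hC S X)))).symm ⟨_, hsec⟩ with hx
    refine ⟨x, ?_⟩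
    funext i
    apply inje (op (X i))
    intro j
    have h1 : (c.π.app j).app _ x = b j := by
      have := Types.isLimitEquivSections_symm_apply (hev (op (sob hC S X))) ⟨_, hsec⟩ j
      simpa using this
    show (c.π.app j).app (op (X i)) (cmp hC c.pt S X x i) = (c.π.app j).app (op (X i)) (a i)
    have nx := types_congr_hom ((c.π.app j).naturality (sinj hC S X i).op) x
    dsimp [cmp] at nx ⊢
    rw [nx, h1, hbj j i]


include hC in
theorem hasLimitsD : HasLimits (ObjectProperty.FullSubcategory (PreservesCountableProducts' (C := C))) :=
  { has_limits_of_shape := fun J _ =>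
      haveI := closedUnderLimits hC J
      hasLimitsOfShape_of_closedUnderLimits J _ }

include hC in
theorem preservesLimitsIncl :
    PreservesLimits (ObjectProperty.ι (PreservesCountableProducts' (C := C))) := by
  constructor
  intro J _
  haveI : CreatesLimitsOfShape J
      (ObjectProperty.ι (PreservesCountableProducts' (C := C))) :=
    haveI := closedUnderLimits hC J
    createsLimitsOfShapeFullSubcategoryInclusion J _
  constructor
  intro K
  exact preservesLimit_of_createsLimit_and_hasLimit _ _

variable (A : Cᵒᵖ ⥤ Type u)

/-- Terms over a presheaf `A`: the elements needed to close up the image of `A` in a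
countable-product-preserving presheaf. -/
inductive Tm : C → Type u
  | gen {X : C} (a : A.obj (op X)) : Tm X
  | res {X Y : C} (f : X ⟶ Y) (t : Tm Y) : Tm X
  | glue (S : Set ℕ) (X : Idx S → C) (t : ∀ i, Tm (X i)) : Tm (sob hC S X)

section Eval

variable {A}
variable {F : Cᵒᵖ ⥤ Type u} (hF : PreservesCountableProducts' F) (h : A ⟶ F)

/-- Evaluation of terms in a countable-product-preserving presheaf. -/
noncomputable def evalTm : ∀ {X : C}, Tm hC A X → F.obj (op X)
  | _, .gen a => h.app _ a
  | _, .res f t => F.map f.op (evalTm t)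
  | _, .glue S X t => (Equiv.ofBijective _ (cmp_bijective hC hF S X)).symm
      (fun i => evalTm (t i))

@[simp] theorem evalTm_gen {X : C} (a : A.obj (op X)) :
    evalTm hC hF h (Tm.gen (hC := hC) a) = h.app _ a := rfl

@[simp] theorem evalTm_res {X Y : C} (f : X ⟶ Y) (t : Tm hC A Y) :
    evalTm hC hF h (Tm.res f t) = F.map f.op (evalTm hC hF h t) := rfl

theorem evalTm_glue (S : Set ℕ) (X : Idx S → C) (t : ∀ i, Tm hC A (X i)) (i : Idx S) :
    F.map (sinj hC S X i).op (evalTm hC hF h (Tm.glue S X t)) = evalTm hC hF h (t i) := by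
  have := congrFun ((Equiv.ofBijective _ (cmp_bijective hC hF S X)).apply_symm_apply
    (fun i => evalTm hC hF h (t i))) i
  exact this

end Eval

/-- The data of a compatible relation on terms, presenting a quotient presheaf. -/
structure RelData where
  r : ∀ X : C, Tm hC A X → Tm hC A X → Prop
  res_congr : ∀ {X Y : C} (f : X ⟶ Y) {t t' : Tm hC A Y},
    r Y t t' → r X (.res f t) (.res f t')
  res_id : ∀ {X : C} (t : Tm hC A X), r X (.res (𝟙 X) t) t
  res_comp : ∀ {X Y Z : C} (f : X ⟶ Y) (g : Y ⟶ Z) (t : Tm hC A Z),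
    r X (.res f (.res g t)) (.res (f ≫ g) t)
  gen_natural : ∀ {X Y : C} (f : X ⟶ Y) (a : A.obj (op Y)),
    r X (.gen (A.map f.op a)) (.res f (.gen a))

variable {hC A}

/-- The quotient presheaf associated to relation data. -/
def RelData.presheaf (d : RelData hC A) : Cᵒᵖ ⥤ Type u where
  obj Z := Quot (d.r Z.unop)
  map {Z W} f := TypeCat.ofHom (Quot.lift (fun t => Quot.mk _ (.res f.unop t))
    (fun _ _ hr => Quot.sound (d.res_congr f.unop hr)))
  map_id Z := by
    ext q
    induction q using Quot.ind with
    | _ t => exact Quot.sound (d.res_id t)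
  map_comp {Z W V} f g := by
    ext q
    induction q using Quot.ind with
    | _ t => exact (Quot.sound (d.res_comp g.unop f.unop t)).symm

/-- The unit map into the quotient presheaf. -/
def RelData.unit (d : RelData hC A) : A ⟶ d.presheaf where
  app Z := TypeCat.ofHom fun a => Quot.mk _ (.gen a)
  naturality Z W f := by
    ext a
    exact Quot.sound (d.gen_natural f.unop a)


section Factor

variable (hC)
variable {F : Cᵒᵖ ⥤ Type u} (hF : PreservesCountableProducts' F) (h : A ⟶ F)

/-- The kernel relation of term evaluation. -/
noncomputable def kerRel : RelData hC A where
  r X t t' := evalTm hC hF h t = evalTm hC hF h t'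
  res_congr := fun {X Y} f {t t'} hr => by
    show evalTm hC hF h _ = evalTm hC hF h _
    rw [evalTm_res, evalTm_res, hr]
  res_id := fun {X} t => by
    show evalTm hC hF h _ = evalTm hC hF h t
    rw [evalTm_res]
    simp
  res_comp := fun {X Y Z} f g t => by
    show evalTm hC hF h _ = evalTm hC hF h _
    rw [evalTm_res, evalTm_res, evalTm_res]
    simp [op_comp, FunctorToTypes.map_comp_apply]
  gen_natural := fun {X Y} f a => by
    show evalTm hC hF h _ = evalTm hC hF h _
    rw [evalTm_res, evalTm_gen, evalTm_gen]
    have := types_congr_hom (h.naturality f.op) a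
    simpa using this

/-- The comparison from the quotient presheaf to `F`. -/
noncomputable def kerRelHom : (kerRel hC hF h).presheaf ⟶ F where
  app Z := TypeCat.ofHom (Quot.lift (fun t => evalTm hC hF h t) (fun _ _ hr => hr))
  naturality Z W f := by
    ext q
    induction q using Quot.ind with
    | _ t => rfl

theorem kerRel_presheaf_preserves :
    PreservesCountableProducts' (kerRel hC hF h).presheaf := by
  apply preserves_of_cmp_bijective hC
  intro S X
  constructor
  · intro q q'
    induction q using Quot.ind with
    | _ t =>
    induction q' using Quot.ind with
    | _ t' =>
    intro hqq
    apply Quot.sound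
    apply (cmp_bijective hC hF S X).1
    funext i
    have := congrArg (fun v => ((kerRelHom hC hF h).app (op (X i))) (v i)) hqq
    dsimp [cmp, RelData.presheaf, kerRelHom] at this ⊢
    exact this
  · intro a
    have hrep : ∀ i, ∃ t : Tm hC A (X i), Quot.mk _ t = a i := fun i => Quot.exists_rep _
    choose t ht using hrep
    refine ⟨Quot.mk _ (.glue S X t), ?_⟩
    funext i
    have : (kerRel hC hF h).r (X i) (.res (sinj hC S X i) (.glue S X t)) (t i) := by
      show evalTm hC hF h _ = _
      rw [evalTm_res]
      exact evalTm_glue hC hF h S X t i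
    exact (Quot.sound this).trans (ht i)

end Factor

include hC in
theorem solutionSet :
    SolutionSetCondition.{u} (ObjectProperty.ι (PreservesCountableProducts' (C := C))) := by
  intro A
  refine ⟨{d : RelData hC A // PreservesCountableProducts' d.presheaf},
    fun d => ⟨d.1.presheaf, d.2⟩, fun d => d.1.unit, ?_⟩
  intro F₀ h
  refine ⟨⟨kerRel hC F₀.2 h, kerRel_presheaf_preserves hC F₀.2 h⟩, ObjectProperty.homMk (kerRelHom hC F₀.2 h), ?_⟩
  ext Z a
  rfl

end Shapes

end Stmt9Aux

/-- if a small category `C` has countable coproducts, then the full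
subcategory of `Cᵒᵖ ⥤ Type` of countable-product-preserving functors has all small
colimits. -/
theorem stmt9 {C : Type u} [SmallCategory C]
    (hC : ∀ (J : Type u), Countable J → HasColimitsOfShape (Discrete J) C) :
    HasColimits (ObjectProperty.FullSubcategory (PreservesCountableProducts' (C := C))) := by
  haveI : HasLimits (ObjectProperty.FullSubcategory (PreservesCountableProducts' (C := C))) :=
    Stmt9Aux.hasLimitsD hC
  haveI : PreservesLimits (ObjectProperty.ι (PreservesCountableProducts' (C := C))) :=
    Stmt9Aux.preservesLimitsIncl hC
  haveI : (ObjectProperty.ι (PreservesCountableProducts' (C := C))).IsRightAdjoint :=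
    isRightAdjoint_of_preservesLimits_of_solutionSetCondition _ (Stmt9Aux.solutionSet (hC := hC))
  haveI : Reflective (ObjectProperty.ι (PreservesCountableProducts' (C := C))) :=
    { L := _
      adj := Adjunction.ofIsRightAdjoint _ }
  exact hasColimits_of_reflective (ObjectProperty.ι (PreservesCountableProducts' (C := C)))
end

section
/- Let C be a small category with countable coproducts, let J be a countable index set, and let c : J → C be a family of objects with coproduct ∐_j c_j. Each representable presheaf C(−, x) preserves countable products, hence lies in the full subcategory of C^op ⥤ Type of countable-product-preserving functors; and the cocone in this full subcategory with vertex C(−, ∐_j c_j) and legs given by postcomposition with the coproduct injections c_j ⟶ ∐_j c_j is a colimit cocone. In other words, the Yoneda embedding y : C → C̄, y(c) = C(−,c), into the category C̄ of countable-product-preserving presheaves preserves countable coproducts. -/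
open CategoryTheory CategoryTheory.Limits

universe u

open Opposite in
/-- Auxiliary: the lift of yoneda to the subcategory of countable-product-preserving
presheaves sends a colimit cofan over a countable family to a colimit cocone. -/
noncomputable def stmt10Aux {C : Type u} [SmallCategory C] {J : Type u} (hJ : Countable J)
    (hrep : ∀ x : C, PreservesCountableProducts' (yoneda.obj x))
    (f : J → C) (c : Cofan f) (hc : IsColimit c) :
    IsColimit ((ObjectProperty.lift (PreservesCountableProducts' (C := C)) yoneda
      hrep).mapCocone c) := by
  set L := ObjectProperty.lift (PreservesCountableProducts' (C := C)) yoneda hrep with hL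
  have hop : IsLimit (Cofan.op c) := Cofan.IsColimit.op hc
  refine IsColimit.mk (fun s =>
      haveI : PreservesLimitsOfShape (Discrete J) s.pt.obj := (s.pt.property J hJ).some
      ObjectProperty.homMk (yonedaEquiv.symm ((isLimitOfPreserves s.pt.obj hop).lift
        ⟨PUnit, Discrete.natTrans (fun j => TypeCat.ofHom (fun _ => yonedaEquiv (s.ι.app j).hom))⟩ PUnit.unit)))
    ?fac ?uniq
  case fac =>
    intro s j
    haveI : PreservesLimitsOfShape (Discrete J) s.pt.obj := (s.pt.property J hJ).some
    -- morphisms in the full subcategory are just morphisms of presheaves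
    apply ObjectProperty.hom_ext
    show yoneda.map (c.ι.app j) ≫ _ = (s.ι.app j).hom
    apply yonedaEquiv.injective
    rw [← yonedaEquiv_naturality]
    beta_reduce
    erw [Equiv.apply_symm_apply]
    exact types_congr_hom ((isLimitOfPreserves s.pt.obj hop).fac
      ⟨PUnit, Discrete.natTrans (fun j => TypeCat.ofHom (fun _ => yonedaEquiv (s.ι.app j).hom))⟩ j) PUnit.unit
  case uniq =>
    intro s m hm
    haveI : PreservesLimitsOfShape (Discrete J) s.pt.obj := (s.pt.property J hJ).some
    apply ObjectProperty.hom_ext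
    apply yonedaEquiv.injective
    erw [Equiv.apply_symm_apply]
    have := (isLimitOfPreserves s.pt.obj hop).uniq
      ⟨PUnit, Discrete.natTrans (fun j => TypeCat.ofHom (fun _ => yonedaEquiv (s.ι.app j).hom))⟩
      (TypeCat.ofHom (fun _ => yonedaEquiv m.hom)) (fun j => ?_)
    · exact types_congr_hom this PUnit.unit
    · refine ConcreteCategory.hom_ext _ _ (fun u => ?_)
      show s.pt.obj.map (c.ι.app j).op (yonedaEquiv m.hom) = yonedaEquiv (s.ι.app j).hom
      rw [yonedaEquiv_naturality]
      exact congrArg (fun g => yonedaEquiv g.hom) (hm j)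

/-- each representable presheaf preserves countable products, so the Yoneda
embedding factors through the full subcategory `C̄` of countable-product-preserving
presheaves; and the resulting embedding `y : C ⥤ C̄` preserves countable coproducts
(the cocone with vertex `C(−, ∐ⱼ cⱼ)` and legs given by postcomposition with the
coproduct injections is a colimit cocone, for every countable family `c : J → C`). -/
theorem stmt10 {C : Type u} [SmallCategory C]
    (hC : ∀ (J : Type u), Countable J → HasColimitsOfShape (Discrete J) C) :
    ∃ hrep : ∀ x : C, PreservesCountableProducts' (yoneda.obj x),
      ∀ (J : Type u), Countable J →
        Nonempty (PreservesColimitsOfShape (Discrete J)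
          (ObjectProperty.lift (PreservesCountableProducts' (C := C)) yoneda hrep)) := by
  have hrep : ∀ x : C, PreservesCountableProducts' (yoneda.obj x) := fun x J hJ => by
    haveI : Countable J := hJ
    exact ⟨inferInstance⟩
  refine ⟨hrep, fun J hJ => ⟨⟨fun {K} => ?_⟩⟩⟩
  haveI : Countable J := hJ
  haveI : PreservesColimit (Discrete.functor (K.obj ∘ Discrete.mk))
      (ObjectProperty.lift (PreservesCountableProducts' (C := C)) yoneda hrep) :=
    ⟨fun {c} hc => ⟨stmt10Aux hJ hrep _ c hc⟩⟩
  exact preservesColimit_of_iso_diagram _ (Discrete.natIsoFunctor (F := K)).symm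
end

section
/- Let X be a metrizable, second-countable (equivalently separable metrizable) topological space equipped with its Borel σ-algebra, and equip the set C(X, ℝ≥0) of continuous functions from X to the nonnegative reals with the σ-algebra generated by the sets {f | f(x) ≤ r} for x ∈ X and r ∈ ℝ≥0. Then the evaluation map ev : C(X, ℝ≥0) × X → ℝ≥0, ev(f,x) = f(x), is measurable with respect to the product σ-algebra. -/
open MeasureTheory
open scoped NNReal

/-- The σ-algebra on `C(X, ℝ≥0)` generated by the sets `{f | f x ≤ r}`. -/
def densitySigmaAlgebra (X : Type*) [TopologicalSpace X] :
    MeasurableSpace C(X, ℝ≥0) :=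
  MeasurableSpace.generateFrom
    {S | ∃ (x : X) (r : ℝ≥0), S = {f : C(X, ℝ≥0) | f x ≤ r}}

lemma measurable_eval_fixed {X : Type*} [TopologicalSpace X] (x : X) :
    @Measurable C(X, ℝ≥0) ℝ≥0 (densitySigmaAlgebra X) _ (fun f => f x) := by
  letI : MeasurableSpace C(X, ℝ≥0) := densitySigmaAlgebra X
  apply measurable_of_Iic
  intro r
  exact MeasurableSpace.measurableSet_generateFrom ⟨x, r, rfl⟩

/-- for a separable metrizable (= metrizable second-countable) space `X`
with its Borel σ-algebra, the evaluation map `ev : C(X, ℝ≥0) × X → ℝ≥0`,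
`ev(f,x) = f(x)`, is measurable (w.r.t. the product of the σ-algebra generated by the
sets `{f | f x ≤ r}` and the Borel σ-algebra on `X`). -/
theorem stmt15 {X : Type*} [TopologicalSpace X] [TopologicalSpace.MetrizableSpace X]
    [SecondCountableTopology X] [mX : MeasurableSpace X] [BorelSpace X] :
    @Measurable (C(X, ℝ≥0) × X) ℝ≥0
      (@Prod.instMeasurableSpace _ _ (densitySigmaAlgebra X) mX) _
      (fun p => p.1 p.2) := by
  letI mC : MeasurableSpace C(X, ℝ≥0) := densitySigmaAlgebra X
  rcases isEmpty_or_nonempty X with hX | hX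
  · haveI : IsEmpty (C(X, ℝ≥0) × X) := ⟨fun p => hX.false p.2⟩
    exact measurable_of_empty _
  · letI : MetricSpace X := TopologicalSpace.metrizableSpaceMetric X
    borelize X
    set u : ℕ → X := TopologicalSpace.denseSeq X with hu
    have hdense : DenseRange u := TopologicalSpace.denseRange_denseSeq X
    have hex : ∀ (n : ℕ) (x : X), ∃ k, dist x (u k) < 1 / (n + 1) := by
      intro n x
      rcases hdense.exists_dist_lt x (by positivity : (0:ℝ) < 1 / (n+1)) with ⟨k, hk⟩
      exact ⟨k, by simpa [dist_comm] using hk⟩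
    set K : ℕ → X → ℕ := fun n x => Nat.find (hex n x) with hK
    have hKdist : ∀ n x, dist x (u (K n x)) < 1 / (n + 1) := fun n x => Nat.find_spec (hex n x)
    have hKmeas : ∀ n, Measurable (K n) := by
      intro n
      apply measurable_to_countable'
      intro k
      have heq : K n ⁻¹' {k} = {x | dist x (u k) < 1/(n+1)} ∩
          ⋂ j ∈ Finset.range k, {x | ¬ dist x (u j) < 1/(n+1)} := by
        ext x
        simp only [Set.mem_preimage, Set.mem_singleton_iff, Set.mem_inter_iff, Set.mem_setOf_eq,
          Set.mem_iInter, Finset.mem_range, hK]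
        constructor
        · rintro rfl
          exact ⟨Nat.find_spec (hex n x), fun j hj => Nat.find_min (hex n x) hj⟩
        · rintro ⟨h1, h2⟩
          exact (Nat.find_eq_iff (hex n x)).2 ⟨h1, fun j hj => h2 j hj⟩
      rw [heq]
      have hopen : ∀ j : ℕ, MeasurableSet {x : X | dist x (u j) < 1/(n+1)} := fun j =>
        (isOpen_lt (continuous_id.dist continuous_const) continuous_const).measurableSet
      exact (hopen k).inter (MeasurableSet.biInter (Finset.range k).countable_toSet
        (fun j _ => (hopen j).compl))
    -- approximations
    have hF : ∀ n : ℕ, Measurable (fun p : C(X, ℝ≥0) × X => p.1 (u (K n p.2))) := by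
      intro n
      have h1 : Measurable (fun q : C(X, ℝ≥0) × ℕ => q.1 (u q.2)) := by
        apply measurable_from_prod_countable_left
        intro k
        exact measurable_eval_fixed (u k)
      exact h1.comp (measurable_fst.prodMk ((hKmeas n).comp measurable_snd))
    apply measurable_of_tendsto_metrizable hF
    rw [tendsto_pi_nhds]
    intro p
    apply (p.1.continuous.tendsto p.2).comp
    rw [tendsto_iff_dist_tendsto_zero]
    exact squeeze_zero (fun n => dist_nonneg)
      (fun n => le_of_lt (by simpa [dist_comm] using hKdist n p.2))
      tendsto_one_div_add_atTop_nhds_zero_nat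
end

section
/- Let X be a metrizable, second-countable topological space equipped with its Borel σ-algebra, and let μ be a σ-finite measure on X. Equip the set C(X, ℝ≥0) of continuous functions from X to the nonnegative reals with the σ-algebra generated by the sets {f | f(x) ≤ r} for x ∈ X and r ∈ ℝ≥0, and equip the space of measures on X with the σ-algebra generated by the evaluation maps ν ↦ ν(U) for measurable U. Then the map dist : C(X, ℝ≥0) → Measure(X) sending f to μ.withDensity(fun x => f x) is measurable. -/
open MeasureTheory
open scoped NNReal ENNReal

/-- for a metrizable second-countable space `X` with its Borel σ-algebra
and a σ-finite measure `μ` on `X`, the map `dist : C(X, ℝ≥0) → Measure X`,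
`dist(f) = μ.withDensity f` (so `dist(f)(U) = ∫_U f dμ`), is measurable, where
`C(X, ℝ≥0)` carries the σ-algebra generated by the sets `{f | f x ≤ r}` and the space
of measures carries the σ-algebra generated by the evaluation maps. -/
theorem stmt16 {X : Type*} [TopologicalSpace X] [TopologicalSpace.MetrizableSpace X]
    [SecondCountableTopology X] [mX : MeasurableSpace X] [BorelSpace X]
    (μ : Measure X) [SigmaFinite μ] :
    @Measurable C(X, ℝ≥0) (Measure X) (densitySigmaAlgebra X)
      MeasureTheory.Measure.instMeasurableSpace
      (fun f => μ.withDensity (fun x => (f x : ℝ≥0∞))) := by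
  letI : MeasurableSpace C(X, ℝ≥0) := densitySigmaAlgebra X
  apply Measure.measurable_of_measurable_coe
  intro U hU
  simp_rw [withDensity_apply _ hU]
  have heval : ∀ x : X, Measurable (fun f : C(X, ℝ≥0) => f x) := by
    intro x
    refine measurable_of_Iic fun r => ?_
    exact MeasurableSpace.measurableSet_generateFrom ⟨x, r, rfl⟩
  have hj : Measurable (Function.uncurry fun (x : X) (f : C(X, ℝ≥0)) => f x) :=
    measurable_uncurry_of_continuous_of_measurable (fun f => f.continuous) heval
  have hm : Measurable (fun p : C(X, ℝ≥0) × X => ((p.1 p.2 : ℝ≥0) : ℝ≥0∞)) :=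
    measurable_coe_nnreal_ennreal.comp (hj.comp measurable_swap)
  exact hm.lintegral_prod_right'
end
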